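/- Let P, Q be isogonal conjugates in triangle ABC, i.e., the reflections of lines AP, BP, CP in the respective angle bisectors of A, B, C pass through Q. Then the six feet of the perpendiculars from P and from Q to the three sides of ABC all lie on a single circle centered at the midpoint of segment PQ. -/

import Mathlib

open Complex ComplexConjugate

/-- The foot of the perpendicular from `p` to the line through `u` and `v` in `ℂ`. -/
noncomputable def perpFoot (p u v : ℂ) : ℂ :=
  u + ((((p - u) * conj (v - u)).re / Complex.normSq (v - u) : ℝ) : ℂ) * (v - u)

lemma foot_sub_mid (p q u v : ℂ) (h : v ≠ u) :
    perpFoot p u v - (p + q) / 2 =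
      ((u - q) * conj (v - u) + (conj p - conj u) * (v - u)) / (2 * conj (v - u)) := by
  have hvu : v - u ≠ 0 := sub_ne_zero.mpr h
  have hcvu : (conj (v - u) : ℂ) ≠ 0 := fun h0 => hvu (by simpa using congrArg conj h0)
  have h1 := Complex.add_conj ((p - u) * conj (v - u))
  have h2 : conj ((p - u) * conj (v - u)) = (conj p - conj u) * (v - u) := by
    simp [map_mul, map_sub]
  rw [h2] at h1
  push_cast at h1
  have hre : ((((p - u) * conj (v - u)).re : ℝ) : ℂ)
      = ((p - u) * conj (v - u) + (conj p - conj u) * (v - u)) / 2 := by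
    linear_combination (-1 / 2 : ℂ) * h1
  have hns : ((Complex.normSq (v - u) : ℝ) : ℂ) = (v - u) * conj (v - u) :=
    (Complex.mul_conj _).symm
  unfold perpFoot
  have hcvu' : (conj v - conj u : ℂ) ≠ 0 := by rw [← map_sub]; exact hcvu
  rw [Complex.ofReal_div, hre, hns]
  field_simp [hvu, hcvu, hcvu']
  ring

lemma abs_eq_of_mul_conj_eq {x y : ℂ} (h : x * conj x = y * conj y) :
    ‖x‖ = ‖y‖ := by
  have hn : Complex.normSq x = Complex.normSq y := by
    apply Complex.ofReal_injective
    rw [← Complex.mul_conj, ← Complex.mul_conj, h]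
  rw [Complex.norm_def, Complex.norm_def, hn]

theorem pedal_circle_of_isogonal_conjugates (a b c p q : ℂ)
    (hnc : ¬ Collinear ℝ ({a, b, c} : Set ℂ))
    (ha : ((p - a) * (q - a) * conj ((b - a) * (c - a))).im = 0)
    (hb : ((p - b) * (q - b) * conj ((a - b) * (c - b))).im = 0)
    (hc : ((p - c) * (q - c) * conj ((a - c) * (b - c))).im = 0) :
    ∃ r : ℝ, ∀ f ∈ [perpFoot p b c, perpFoot p c a, perpFoot p a b,
                    perpFoot q b c, perpFoot q c a, perpFoot q a b],
      ‖f - (p + q) / 2‖ = r := by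
  have hcb : c ≠ b := by
    rintro rfl
    exact hnc (by simpa [Set.insert_comm, Set.pair_comm] using collinear_pair ℝ a c)
  have hac : a ≠ c := by
    rintro rfl
    exact hnc (by simpa [Set.insert_comm, Set.pair_comm] using collinear_pair ℝ a b)
  have hba : b ≠ a := by
    rintro rfl
    exact hnc (by simpa [Set.insert_comm, Set.pair_comm] using collinear_pair ℝ b c)
  have hcb' : c - b ≠ 0 := sub_ne_zero.mpr hcb
  have hac' : a - c ≠ 0 := sub_ne_zero.mpr hac
  have hba' : b - a ≠ 0 := sub_ne_zero.mpr hba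
  have hcb'' : (conj c - conj b : ℂ) ≠ 0 := by
    rw [← map_sub]; exact fun h0 => hcb' (by simpa using congrArg conj h0)
  have hac'' : (conj a - conj c : ℂ) ≠ 0 := by
    rw [← map_sub]; exact fun h0 => hac' (by simpa using congrArg conj h0)
  have hba'' : (conj b - conj a : ℂ) ≠ 0 := by
    rw [← map_sub]; exact fun h0 => hba' (by simpa using congrArg conj h0)
  have dbc : (2 * (conj c - conj b)) * (2 * (c - b)) ≠ 0 :=
    mul_ne_zero (mul_ne_zero two_ne_zero hcb'') (mul_ne_zero two_ne_zero hcb')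
  have dca : (2 * (conj a - conj c)) * (2 * (a - c)) ≠ 0 :=
    mul_ne_zero (mul_ne_zero two_ne_zero hac'') (mul_ne_zero two_ne_zero hac')
  have dab : (2 * (conj b - conj a)) * (2 * (b - a)) ≠ 0 :=
    mul_ne_zero (mul_ne_zero two_ne_zero hba'') (mul_ne_zero two_ne_zero hba')
  have Ha := (Complex.conj_eq_iff_im).mpr ha
  have Hb := (Complex.conj_eq_iff_im).mpr hb
  have Hc := (Complex.conj_eq_iff_im).mpr hc
  simp only [map_mul, map_sub, Complex.conj_conj] at Ha Hb Hc
  refine ⟨‖perpFoot p b c - (p + q) / 2‖, ?_⟩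
  intro f hf
  simp only [List.mem_cons, List.not_mem_nil, or_false] at hf
  have base := foot_sub_mid p q b c hcb
  rcases hf with rfl | rfl | rfl | rfl | rfl | rfl
  · rfl
  · apply abs_eq_of_mul_conj_eq
    rw [base, foot_sub_mid p q c a hac]
    simp only [map_div₀, map_mul, map_add, map_sub, Complex.conj_conj, map_ofNat]
    rw [div_mul_div_comm, div_mul_div_comm, div_eq_div_iff dca dbc]
    linear_combination (-(4 * (a * conj b - a * conj c - b * conj a + b * conj c
      + c * conj a - c * conj b))) * Hc
  · apply abs_eq_of_mul_conj_eq
    rw [base, foot_sub_mid p q a b hba]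
    simp only [map_div₀, map_mul, map_add, map_sub, Complex.conj_conj, map_ofNat]
    rw [div_mul_div_comm, div_mul_div_comm, div_eq_div_iff dab dbc]
    linear_combination (4 * (a * conj b - a * conj c - b * conj a + b * conj c
      + c * conj a - c * conj b)) * Hb
  · apply abs_eq_of_mul_conj_eq
    rw [base, add_comm p q, foot_sub_mid q p b c hcb]
    simp only [map_div₀, map_mul, map_add, map_sub, Complex.conj_conj, map_ofNat]
    rw [div_mul_div_comm, div_mul_div_comm, div_eq_div_iff dbc dbc]
    ring
  · apply abs_eq_of_mul_conj_eq
    rw [base, add_comm p q, foot_sub_mid q p c a hac]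
    simp only [map_div₀, map_mul, map_add, map_sub, Complex.conj_conj, map_ofNat]
    rw [div_mul_div_comm, div_mul_div_comm, div_eq_div_iff dca dbc]
    linear_combination (-(4 * (a * conj b - a * conj c - b * conj a + b * conj c
      + c * conj a - c * conj b))) * Hc
  · apply abs_eq_of_mul_conj_eq
    rw [base, add_comm p q, foot_sub_mid q p a b hba]
    simp only [map_div₀, map_mul, map_add, map_sub, Complex.conj_conj, map_ofNat]
    rw [div_mul_div_comm, div_mul_div_comm, div_eq_div_iff dab dbc]
    linear_combination (4 * (a * conj b - a * conj c - b * conj a + b * conj c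
      + c * conj a - c * conj b)) * Hb
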